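/- Let d ≥ 1, ᾱ ∈ (0,1), r > 0, ε ≥ 0, and x₀, Δx ∈ ℝ^d with ‖Δx‖₂ < r. Let μ = N(√ᾱ·x₀, (1−ᾱ)·I_d) and ν = N(√ᾱ·(x₀+Δx), (1−ᾱ)·I_d) be the laws of the diffused clean and adversarial inputs. Then for every measurable set E ⊆ ℝ^d, ν(E) ≤ e^ε·μ(E) + Φ( r·√ᾱ/(2·√(1−ᾱ)) − ε·√(1−ᾱ)/(r·√ᾱ) ). -/

import Mathlib

open MeasureTheory ProbabilityTheory Real

/-- The Gaussian probability measure `N(m, σ² I_d)` on `ℝ^d`, given by its Lebesgue density. -/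
noncomputable def gaussian (d : ℕ) (m : EuclideanSpace ℝ (Fin d)) (σ2 : ℝ) :
    Measure (EuclideanSpace ℝ (Fin d)) :=
  volume.withDensity fun x => ENNReal.ofReal
    ((2 * π * σ2) ^ (-(d : ℝ) / 2) * Real.exp (-‖x - m‖ ^ 2 / (2 * σ2)))

/-- The standard normal cumulative distribution function `Φ`. -/
noncomputable def stdNormalCDF (x : ℝ) : ℝ := (gaussianReal 0 1 (Set.Iic x)).toReal

open scoped ENNReal NNReal RealInnerProductSpace

lemma lintegral_pi_prod : ∀ (n : ℕ) (h : Fin n → ℝ → ℝ≥0∞), (∀ i, Measurable (h i)) →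
    ∫⁻ y : Fin n → ℝ, ∏ i, h i (y i) ∂(Measure.pi fun _ => volume) = ∏ i, ∫⁻ t, h i t := by
  intro n
  induction n with
  | zero =>
    intro h _
    simp [lintegral_const]
  | succ n ih =>
    intro h hm
    have hmp := measurePreserving_piFinSuccAbove (fun _ : Fin (n+1) => (volume : Measure ℝ)) 0
    set e := MeasurableEquiv.piFinSuccAbove (fun _ : Fin (n+1) => ℝ) 0 with he
    have hF : Measurable fun y : Fin (n+1) → ℝ => ∏ i, h i (y i) :=
      Finset.measurable_prod _ fun i _ => (hm i).comp (measurable_pi_apply i)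
    have hsymm : ∀ p : ℝ × (Fin n → ℝ), ∀ i, (e.symm p) i = Fin.insertNth (α := fun _ => ℝ) 0 p.1 p.2 i := by
      intro p i
      rfl
    calc ∫⁻ y : Fin (n+1) → ℝ, ∏ i, h i (y i) ∂(Measure.pi fun _ => volume)
        = ∫⁻ p : ℝ × (Fin n → ℝ), ∏ i, h i ((e.symm p) i)
            ∂((volume : Measure ℝ).prod (Measure.pi fun _ => volume)) :=
          ((MeasurePreserving.symm e hmp).lintegral_comp hF).symm
      _ = ∫⁻ p : ℝ × (Fin n → ℝ), h 0 p.1 * ∏ j, h ((0 : Fin (n+1)).succAbove j) (p.2 j)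
            ∂((volume : Measure ℝ).prod (Measure.pi fun _ => volume)) := by
          refine lintegral_congr fun p => ?_
          rw [Fin.prod_univ_succAbove (fun i => h i ((e.symm p) i)) 0]
          rw [hsymm p 0, Fin.insertNth_apply_same]
          refine congrArg _ (Finset.prod_congr rfl fun j _ => ?_)
          rw [hsymm p _, Fin.insertNth_apply_succAbove]
      _ = (∫⁻ t, h 0 t) * ∏ j, ∫⁻ t, h ((0 : Fin (n+1)).succAbove j) t := by
          have hG : Measurable fun z : Fin n → ℝ => ∏ j, h ((0 : Fin (n+1)).succAbove j) (z j) :=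
            Finset.measurable_prod _ fun j _ => (hm _).comp (measurable_pi_apply j)
          have hmeas : Measurable fun p : ℝ × (Fin n → ℝ) =>
              h 0 p.1 * ∏ j, h ((0 : Fin (n+1)).succAbove j) (p.2 j) :=
            ((hm 0).comp measurable_fst).mul (hG.comp measurable_snd)
          rw [lintegral_prod _ hmeas.aemeasurable]
          rw [← ih (fun j => h ((0 : Fin (n+1)).succAbove j)) (fun j => hm _)]
          rw [← lintegral_mul_const _ (hm 0)]
          refine lintegral_congr fun t => ?_
          show (∫⁻ y : Fin n → ℝ, h 0 t * ∏ j, h ((0 : Fin (n+1)).succAbove j) (y j)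
            ∂(Measure.pi fun _ => volume)) = _
          rw [lintegral_const_mul _ hG]
      _ = ∏ i, ∫⁻ t, h i t := (Fin.prod_univ_succAbove (fun i => ∫⁻ t, h i t) 0).symm


noncomputable def g1 (σ2 t : ℝ) : ℝ≥0∞ :=
  ENNReal.ofReal ((2 * π * σ2) ^ (-(1:ℝ) / 2) * Real.exp (-t ^ 2 / (2 * σ2)))

lemma g1_eq {σ2 : ℝ} (hσ2 : 0 < σ2) : g1 σ2 = gaussianPDF 0 σ2.toNNReal := by
  have h2 : (0:ℝ) ≤ 2 * π * σ2 := by positivity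
  have hcoe : ((σ2.toNNReal : ℝ)) = σ2 := Real.coe_toNNReal _ hσ2.le
  funext t
  unfold g1 gaussianPDF gaussianPDFReal
  rw [hcoe]
  congr 1
  rw [sub_zero]
  congr 1
  rw [show (-(1:ℝ)/2) = -(1/2) by ring, Real.rpow_neg h2, Real.sqrt_eq_rpow]

lemma measurable_g1 (σ2 : ℝ) : Measurable (g1 σ2) := by
  unfold g1
  fun_prop

lemma lintegral_g1 {σ2 : ℝ} (hσ2 : 0 < σ2) : ∫⁻ t, g1 σ2 t = 1 := by
  rw [g1_eq hσ2]
  exact lintegral_gaussianPDF_eq_one 0 (by simp [Real.toNNReal_eq_zero, not_le, hσ2])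

lemma gaussian_inner_apply (d : ℕ) (hd : 0 < d) (σ2 : ℝ) (hσ2 : 0 < σ2)
    (u : EuclideanSpace ℝ (Fin d)) (hu : ‖u‖ = 1) (A : Set ℝ) (hA : MeasurableSet A) :
    gaussian d 0 σ2 {x | ⟪u, x⟫ ∈ A} = gaussianReal 0 σ2.toNNReal A := by
  haveI : NeZero d := ⟨hd.ne'⟩
  -- orthonormal basis with b 0 = u
  have hcard : Module.finrank ℝ (EuclideanSpace ℝ (Fin d)) = Fintype.card (Fin d) := by simp
  have horth : Orthonormal ℝ (({(0 : Fin d)} : Set (Fin d)).restrict (fun _ => u)) := by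
    constructor
    · exact fun i => hu
    · intro i j hij
      exact absurd (Subtype.ext ((i.2 : i.1 ∈ ({0} : Set (Fin d))).trans
        ((j.2 : j.1 ∈ ({0} : Set (Fin d))).symm))) hij
  obtain ⟨b, hb⟩ := horth.exists_orthonormalBasis_extension_of_card_eq hcard
  have hb0 : b 0 = u := hb 0 rfl
  have hv : σ2.toNNReal ≠ 0 := by simp [Real.toNNReal_eq_zero, not_le, hσ2]
  have h2 : (0:ℝ) ≤ 2 * π * σ2 := by positivity
  -- the density on E
  set f : EuclideanSpace ℝ (Fin d) → ℝ≥0∞ := fun x => ENNReal.ofReal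
    ((2 * π * σ2) ^ (-(d : ℝ) / 2) * Real.exp (-‖x - 0‖ ^ 2 / (2 * σ2))) with hf_def
  have hf : Measurable f := by
    apply Measurable.ennreal_ofReal
    fun_prop
  have hS : MeasurableSet {x : EuclideanSpace ℝ (Fin d) | ⟪u, x⟫ ∈ A} := by
    exact (innerSL ℝ u).continuous.measurable hA
  -- the 1D factors
  set h : Fin d → ℝ → ℝ≥0∞ := fun i => if i = 0 then A.indicator (g1 σ2) else g1 σ2 with hh_def
  have hh0 : h 0 = A.indicator (g1 σ2) := by simp [hh_def]
  have hhi : ∀ i : Fin d, i ≠ 0 → h i = g1 σ2 := fun i hi => by simp [hh_def, hi]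
  have hhm : ∀ i, Measurable (h i) := by
    intro i
    by_cases hi : i = 0
    · rw [hi, hh0]; exact (measurable_g1 σ2).indicator hA
    · rw [hhi i hi]; exact measurable_g1 σ2
  -- product formula for the density
  have hprod : ∀ z : Fin d → ℝ,
      ENNReal.ofReal ((2 * π * σ2) ^ (-(d : ℝ) / 2) *
        Real.exp (-(∑ i, z i ^ 2) / (2 * σ2))) = ∏ i, g1 σ2 (z i) := by
    intro z
    unfold g1
    rw [← ENNReal.ofReal_prod_of_nonneg (fun i _ => by positivity)]
    congr 1
    rw [Finset.prod_mul_distrib, Finset.prod_const, ← Real.exp_sum]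
    congr 1
    · rw [← Real.rpow_natCast ((2 * π * σ2) ^ (-(1:ℝ)/2)) (Finset.univ.card),
        ← Real.rpow_mul h2]
      simp only [Finset.card_univ, Fintype.card_fin]
      congr 1
      ring
    · rw [← Finset.sum_div, ← Finset.sum_neg_distrib]
  calc gaussian d 0 σ2 {x | ⟪u, x⟫ ∈ A}
      = ∫⁻ x, Set.indicator {x | ⟪u, x⟫ ∈ A} f x ∂(volume : Measure (EuclideanSpace ℝ (Fin d))) := by
        rw [gaussian, withDensity_apply _ hS, ← lintegral_indicator hS _]
    _ = ∫⁻ y, Set.indicator {x | ⟪u, x⟫ ∈ A} f (b.repr.symm y)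
          ∂(volume : Measure (EuclideanSpace ℝ (Fin d))) :=
        ((b.measurePreserving_repr_symm).lintegral_comp (hf.indicator hS)).symm
    _ = ∫⁻ y, Set.indicator {y : EuclideanSpace ℝ (Fin d) | y 0 ∈ A}
          (fun y => ENNReal.ofReal ((2 * π * σ2) ^ (-(d : ℝ) / 2) *
            Real.exp (-‖y‖ ^ 2 / (2 * σ2)))) y
          ∂(volume : Measure (EuclideanSpace ℝ (Fin d))) := by
        refine lintegral_congr fun y => ?_
        have hmem : (⟪u, b.repr.symm y⟫ ∈ A) ↔ y 0 ∈ A := by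
          rw [← hb0, ← OrthonormalBasis.repr_apply_apply, LinearIsometryEquiv.apply_symm_apply]
        have hnorm : ‖b.repr.symm y - 0‖ = ‖y‖ := by
          rw [sub_zero, LinearIsometryEquiv.norm_map]
        by_cases hy : y 0 ∈ A
        · rw [Set.indicator_of_mem (by exact hmem.mpr hy), Set.indicator_of_mem (by exact hy)]
          rw [hf_def]
          simp only [hnorm]
        · rw [Set.indicator_of_notMem (by exact fun hc => hy (hmem.mp hc)),
            Set.indicator_of_notMem (by exact hy)]
    _ = ∫⁻ z : Fin d → ℝ, Set.indicator {y : EuclideanSpace ℝ (Fin d) | y 0 ∈ A}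
          (fun y => ENNReal.ofReal ((2 * π * σ2) ^ (-(d : ℝ) / 2) *
            Real.exp (-‖y‖ ^ 2 / (2 * σ2)))) ((MeasurableEquiv.toLp 2 (Fin d → ℝ)) z)
          ∂(Measure.pi fun _ => (volume : Measure ℝ)) := by
        refine ((MeasurePreserving.lintegral_comp ?_ ?_)).symm
        · exact (EuclideanSpace.volume_preserving_symm_measurableEquiv_toLp (Fin d)).symm
        · refine Measurable.indicator ?_ ?_
          · apply Measurable.ennreal_ofReal
            fun_prop
          · exact (EuclideanSpace.proj (0 : Fin d) : EuclideanSpace ℝ (Fin d) →L[ℝ] ℝ).continuous.measurable hA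
    _ = ∫⁻ z : Fin d → ℝ, ∏ i, h i (z i) ∂(Measure.pi fun _ => (volume : Measure ℝ)) := by
        refine lintegral_congr fun z => ?_
        have happ : ∀ i, (MeasurableEquiv.toLp 2 (Fin d → ℝ)) z i = z i := fun i => rfl
        have hnorm2 : ‖(MeasurableEquiv.toLp 2 (Fin d → ℝ)) z‖ ^ 2 = ∑ i, z i ^ 2 := by
          rw [EuclideanSpace.norm_eq]
          rw [Real.sq_sqrt (by positivity)]
          refine Finset.sum_congr rfl fun i _ => ?_
          rw [happ i, Real.norm_eq_abs, sq_abs]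
        by_cases hz : z 0 ∈ A
        · rw [Set.indicator_of_mem (by simpa [happ 0] using hz)]
          rw [hnorm2, hprod z]
          refine Finset.prod_congr rfl fun i _ => ?_
          by_cases hi : i = 0
          · rw [hi, hh0, Set.indicator_of_mem hz]
          · rw [hhi i hi]
        · rw [Set.indicator_of_notMem (by simpa [happ 0] using hz)]
          refine (Finset.prod_eq_zero (Finset.mem_univ (0 : Fin d)) ?_).symm
          rw [hh0, Set.indicator_of_notMem hz]
    _ = ∏ i, ∫⁻ t, h i t := lintegral_pi_prod d h hhm
    _ = gaussianReal 0 σ2.toNNReal A := by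
        have h0 : ∫⁻ t, h 0 t = gaussianReal 0 σ2.toNNReal A := by
          rw [hh0, lintegral_indicator hA _, g1_eq hσ2, ← gaussianReal_apply 0 hv A]
        have hne : ∀ i : Fin d, i ≠ 0 → ∫⁻ t, h i t = 1 := by
          intro i hi
          rw [hhi i hi]
          exact lintegral_g1 hσ2
        rw [Finset.prod_eq_single (0 : Fin d) (fun i _ hi => hne i hi)
          (fun hmem => absurd (Finset.mem_univ _) hmem), h0]



lemma gaussian_shift (d : ℕ) (m : EuclideanSpace ℝ (Fin d)) (σ2 : ℝ)
    (S : Set (EuclideanSpace ℝ (Fin d))) (hS : MeasurableSet S) :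
    gaussian d m σ2 S = gaussian d 0 σ2 ((· + m) ⁻¹' S) := by
  have hSm : MeasurableSet ((· + m) ⁻¹' S) := (measurable_add_const m) hS
  rw [gaussian, gaussian, withDensity_apply _ hS, withDensity_apply _ hSm,
    ← lintegral_indicator hS _, ← lintegral_indicator hSm _]
  rw [← (measurePreserving_add_right (volume : Measure (EuclideanSpace ℝ (Fin d))) m).lintegral_comp
    ((Measurable.ennreal_ofReal (by fun_prop)).indicator hS)]
  refine lintegral_congr fun y => ?_
  by_cases hy : y + m ∈ S
  · rw [Set.indicator_of_mem hy, Set.indicator_of_mem (by exact hy)]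
    simp [add_sub_cancel_right]
  · rw [Set.indicator_of_notMem hy, Set.indicator_of_notMem (by exact hy)]

lemma stdNormalCDF_mono {a b : ℝ} (hab : a ≤ b) : stdNormalCDF a ≤ stdNormalCDF b :=
  ENNReal.toReal_mono (measure_ne_top _ _) (measure_mono (Set.Iic_subset_Iic.mpr hab))

lemma stdNormalCDF_nonneg (a : ℝ) : 0 ≤ stdNormalCDF a := ENNReal.toReal_nonneg

lemma gaussianReal_Ioi_toReal {σ2 : ℝ} (hσ2 : 0 < σ2) (c : ℝ) :
    ((gaussianReal 0 σ2.toNNReal) (Set.Ioi c)).toReal = stdNormalCDF (-c / Real.sqrt σ2) := by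
  have hv : σ2.toNNReal ≠ 0 := by simp [Real.toNNReal_eq_zero, not_le, hσ2]
  set σ := Real.sqrt σ2 with hσ_def
  have hσ : 0 < σ := Real.sqrt_pos.mpr hσ2
  have hmap : (gaussianReal 0 1).map (σ * ·) = gaussianReal 0 σ2.toNNReal := by
    rw [gaussianReal_map_const_mul σ]
    congr 1
    · ring
    · ext
      simp [Real.sq_sqrt hσ2.le, Real.coe_toNNReal _ hσ2.le]
      exact Real.sq_sqrt hσ2.le
  have hIoi : gaussianReal 0 σ2.toNNReal (Set.Ioi c) = gaussianReal 0 1 (Set.Ioi (c / σ)) := by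
    rw [← hmap, Measure.map_apply (measurable_const_mul σ) measurableSet_Ioi]
    congr 1
    ext x
    simp only [Set.mem_preimage, Set.mem_Ioi]
    rw [div_lt_iff₀ hσ, mul_comm]
  have hneg : (gaussianReal 0 1).map (fun x : ℝ => (-1 : ℝ) * x) = gaussianReal 0 1 := by
    rw [gaussianReal_map_const_mul (-1 : ℝ)]
    congr 1
    · ring
    · ext
      simp
  have hsym : gaussianReal 0 1 (Set.Ioi (c / σ)) = gaussianReal 0 1 (Set.Iic (-(c / σ))) := by
    conv_rhs => rw [← hneg, Measure.map_apply (measurable_const_mul (-1 : ℝ)) measurableSet_Iic]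
    have hpre : (fun x : ℝ => (-1 : ℝ) * x) ⁻¹' (Set.Iic (-(c / σ))) = Set.Ici (c / σ) := by
      ext x
      simp only [Set.mem_preimage, Set.mem_Iic, Set.mem_Ici, neg_one_mul, neg_le_neg_iff]
    rw [hpre]
    have hsing : gaussianReal 0 1 {c / σ} = 0 := by
      have hac : gaussianReal 0 1 ≪ (volume : Measure ℝ) :=
        gaussianReal_absolutelyContinuous (v := 1) 0 one_ne_zero
      exact hac Real.volume_singleton
    refine (le_antisymm ?_ (measure_mono Set.Ioi_subset_Ici_self)).symm
    calc gaussianReal 0 1 (Set.Ici (c / σ))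
        ≤ gaussianReal 0 1 (Set.Ioi (c / σ)) + gaussianReal 0 1 {c / σ} := by
          rw [← Set.Ioi_union_left]
          exact measure_union_le _ _
      _ = gaussianReal 0 1 (Set.Ioi (c / σ)) := by rw [hsing, add_zero]
  rw [hIoi, hsym, stdNormalCDF, neg_div]

lemma gaussian_univ (d : ℕ) (hd : 0 < d) (m : EuclideanSpace ℝ (Fin d)) (σ2 : ℝ)
    (hσ2 : 0 < σ2) : gaussian d m σ2 Set.univ = 1 := by
  haveI : NeZero d := ⟨hd.ne'⟩
  have hu : ‖(EuclideanSpace.single (0 : Fin d) (1 : ℝ))‖ = 1 := by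
    rw [EuclideanSpace.norm_single]; norm_num
  rw [gaussian_shift d m σ2 _ MeasurableSet.univ]
  have hset : ((· + m) ⁻¹' Set.univ) =
      {x : EuclideanSpace ℝ (Fin d) |
        ⟪EuclideanSpace.single (0 : Fin d) (1 : ℝ), x⟫ ∈ (Set.univ : Set ℝ)} := by
    simp
  rw [hset, gaussian_inner_apply d hd σ2 hσ2 _ hu _ MeasurableSet.univ]
  simp

theorem stmt0 (d : ℕ) (hd : 1 ≤ d) (ᾱ r ε : ℝ) (hᾱ : ᾱ ∈ Set.Ioo (0 : ℝ) 1)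
    (hr : 0 < r) (hε : 0 ≤ ε) (x₀ Δx : EuclideanSpace ℝ (Fin d)) (hΔx : ‖Δx‖ < r)
    (E : Set (EuclideanSpace ℝ (Fin d))) (hE : MeasurableSet E) :
    ((gaussian d (Real.sqrt ᾱ • (x₀ + Δx)) (1 - ᾱ)) E).toReal ≤
      Real.exp ε * ((gaussian d (Real.sqrt ᾱ • x₀) (1 - ᾱ)) E).toReal +
        stdNormalCDF (r * Real.sqrt ᾱ / (2 * Real.sqrt (1 - ᾱ)) -
          ε * Real.sqrt (1 - ᾱ) / (r * Real.sqrt ᾱ)) := by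
  obtain ⟨hᾱ0, hᾱ1⟩ := hᾱ
  have hd0 : 0 < d := hd
  have hσ2 : 0 < 1 - ᾱ := by linarith
  have hsa : 0 < Real.sqrt ᾱ := Real.sqrt_pos.mpr hᾱ0
  have hσ : 0 < Real.sqrt (1 - ᾱ) := Real.sqrt_pos.mpr hσ2
  set σ2 : ℝ := 1 - ᾱ with hσ2_def
  set m₁ : EuclideanSpace ℝ (Fin d) := Real.sqrt ᾱ • x₀ with hm₁_def
  set m₂ : EuclideanSpace ℝ (Fin d) := Real.sqrt ᾱ • (x₀ + Δx) with hm₂_def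
  set C : ℝ := (2 * π * σ2) ^ (-(d : ℝ) / 2) with hC_def
  have hC : 0 < C := Real.rpow_pos_of_pos (by positivity) _
  by_cases hΔ : Δx = 0
  · subst hΔ
    rw [show m₂ = m₁ from by rw [hm₂_def, hm₁_def, add_zero]]
    have h1 : (1 : ℝ) ≤ Real.exp ε := Real.one_le_exp hε
    have h2 := stdNormalCDF_nonneg (r * Real.sqrt ᾱ / (2 * Real.sqrt σ2) -
      ε * Real.sqrt σ2 / (r * Real.sqrt ᾱ))
    have h3 : (0 : ℝ) ≤ ((gaussian d m₁ σ2) E).toReal := ENNReal.toReal_nonneg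
    nlinarith
  -- main case
  set Δm : EuclideanSpace ℝ (Fin d) := Real.sqrt ᾱ • Δx with hΔm_def
  have hΔm_ne : Δm ≠ 0 := smul_ne_zero hsa.ne' hΔ
  have hΔm_eq : m₂ - m₁ = Δm := by
    rw [hm₂_def, hm₁_def, smul_add, hΔm_def, add_sub_cancel_left]
  set t : ℝ := ‖Δm‖ with ht_def
  have ht : 0 < t := norm_pos_iff.mpr hΔm_ne
  set u : EuclideanSpace ℝ (Fin d) := t⁻¹ • Δm with hu_def
  have hu : ‖u‖ = 1 := by
    rw [hu_def, norm_smul, ht_def, norm_inv, norm_norm, inv_mul_cancel₀ ht.ne']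
  have hΔm_u : Δm = t • u := by
    rw [hu_def, smul_smul, mul_inv_cancel₀ ht.ne', one_smul]
  set c : ℝ := (σ2 * ε - t ^ 2 / 2) / t with hc_def
  set S : Set (EuclideanSpace ℝ (Fin d)) := (fun x => ⟪u, x - m₂⟫) ⁻¹' Set.Ioi c with hS_def
  have hScont : Continuous fun x : EuclideanSpace ℝ (Fin d) => ⟪u, x - m₂⟫ :=
    Continuous.inner continuous_const (continuous_id.sub continuous_const)
  have hSmeas : MeasurableSet S := hScont.measurable measurableSet_Ioi
  -- pointwise density comparison off S
  have hptwise : ∀ x ∉ S,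
      C * Real.exp (-‖x - m₂‖ ^ 2 / (2 * σ2)) ≤
        Real.exp ε * (C * Real.exp (-‖x - m₁‖ ^ 2 / (2 * σ2))) := by
    intro x hx
    have hinner : ⟪u, x - m₂⟫ ≤ c := not_lt.mp (by simpa [hS_def] using hx)
    have hinner' : ⟪Δm, x - m₂⟫ ≤ σ2 * ε - t ^ 2 / 2 := by
      have h1 : ⟪Δm, x - m₂⟫ = t * ⟪u, x - m₂⟫ := by
        rw [hΔm_u, real_inner_smul_left]
      rw [h1]
      calc t * ⟪u, x - m₂⟫ ≤ t * c := mul_le_mul_of_nonneg_left hinner ht.le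
        _ = σ2 * ε - t ^ 2 / 2 := by rw [hc_def, mul_div_cancel₀ _ ht.ne']
    have hnorm : ‖x - m₁‖ ^ 2 = ‖x - m₂‖ ^ 2 + 2 * ⟪x - m₂, Δm⟫ + ‖Δm‖ ^ 2 := by
      have hx1 : x - m₁ = (x - m₂) + Δm := by rw [← hΔm_eq]; abel
      rw [hx1, norm_add_sq_real]
    have key : ‖x - m₁‖ ^ 2 - ‖x - m₂‖ ^ 2 ≤ 2 * σ2 * ε := by
      have hcomm : ⟪x - m₂, Δm⟫ = ⟪Δm, x - m₂⟫ := real_inner_comm _ _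
      rw [hnorm, hcomm, ← ht_def]
      clear_value t σ2 Δm m₁ m₂
      linarith [hinner']
    rw [show Real.exp ε * (C * Real.exp (-‖x - m₁‖ ^ 2 / (2 * σ2))) =
      C * Real.exp (ε + -‖x - m₁‖ ^ 2 / (2 * σ2)) by rw [Real.exp_add]; ring]
    refine mul_le_mul_of_nonneg_left (Real.exp_le_exp.mpr ?_) hC.le
    have h5 : (‖x - m₁‖ ^ 2 - ‖x - m₂‖ ^ 2) / (2 * σ2) ≤ ε :=
      (div_le_iff₀ (by positivity)).mpr (by linarith)
    rw [sub_div] at h5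
    rw [neg_div, neg_div]
    linarith
  -- measure-level comparison
  have hν_diff : gaussian d m₂ σ2 (E \ S) ≤
      ENNReal.ofReal (Real.exp ε) * gaussian d m₁ σ2 E := by
    have hmeasES : MeasurableSet (E \ S) := hE.diff hSmeas
    have hdμ : Measurable fun x : EuclideanSpace ℝ (Fin d) =>
        ENNReal.ofReal (C * Real.exp (-‖x - m₁‖ ^ 2 / (2 * σ2))) :=
      Measurable.ennreal_ofReal (by fun_prop)
    calc gaussian d m₂ σ2 (E \ S)
        = ∫⁻ x in E \ S, ENNReal.ofReal (C * Real.exp (-‖x - m₂‖ ^ 2 / (2 * σ2))) := by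
          rw [gaussian, withDensity_apply _ hmeasES]
      _ ≤ ∫⁻ x in E \ S, ENNReal.ofReal (Real.exp ε) *
            ENNReal.ofReal (C * Real.exp (-‖x - m₁‖ ^ 2 / (2 * σ2))) := by
          refine setLIntegral_mono (by fun_prop) fun x hx => ?_
          rw [← ENNReal.ofReal_mul (Real.exp_nonneg ε)]
          exact ENNReal.ofReal_le_ofReal (hptwise x hx.2)
      _ = ENNReal.ofReal (Real.exp ε) *
            ∫⁻ x in E \ S, ENNReal.ofReal (C * Real.exp (-‖x - m₁‖ ^ 2 / (2 * σ2))) :=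
          lintegral_const_mul _ hdμ
      _ ≤ ENNReal.ofReal (Real.exp ε) * gaussian d m₁ σ2 E := by
          rw [gaussian, withDensity_apply _ hE]
          exact mul_le_mul_of_nonneg_left (lintegral_mono_set Set.diff_subset) (zero_le)
  have hcomp : gaussian d m₂ σ2 E ≤
      ENNReal.ofReal (Real.exp ε) * gaussian d m₁ σ2 E + gaussian d m₂ σ2 S := by
    calc gaussian d m₂ σ2 E
        = gaussian d m₂ σ2 (E ∩ S) + gaussian d m₂ σ2 (E \ S) :=
          (measure_inter_add_diff E hSmeas).symm
      _ ≤ gaussian d m₂ σ2 S + ENNReal.ofReal (Real.exp ε) * gaussian d m₁ σ2 E :=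
          add_le_add (measure_mono Set.inter_subset_right) hν_diff
      _ = _ := add_comm _ _
  -- computing ν S
  have hνS : gaussian d m₂ σ2 S = gaussianReal 0 σ2.toNNReal (Set.Ioi c) := by
    rw [gaussian_shift d m₂ σ2 S hSmeas]
    have hpre : ((· + m₂) ⁻¹' S) =
        {y : EuclideanSpace ℝ (Fin d) | ⟪u, y⟫ ∈ Set.Ioi c} := by
      ext y
      simp only [hS_def, Set.mem_preimage, Set.mem_setOf_eq, add_sub_cancel_right]
    rw [hpre, gaussian_inner_apply d hd0 σ2 hσ2 u hu _ measurableSet_Ioi]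
  have hνS_toReal : ((gaussian d m₂ σ2) S).toReal = stdNormalCDF (-c / Real.sqrt σ2) := by
    rw [hνS, gaussianReal_Ioi_toReal hσ2 c]
  -- the CDF argument bound
  have ht_le : t ≤ r * Real.sqrt ᾱ := by
    rw [ht_def, hΔm_def, norm_smul, Real.norm_eq_abs, abs_of_nonneg (Real.sqrt_nonneg _)]
    rw [mul_comm]
    exact mul_le_mul_of_nonneg_right hΔx.le (Real.sqrt_nonneg _)
  have harg : -c / Real.sqrt σ2 = t / (2 * Real.sqrt σ2) - ε * Real.sqrt σ2 / t := by
    have hσsq : Real.sqrt σ2 ^ 2 = σ2 := Real.sq_sqrt hσ2.le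
    rw [hc_def]
    field_simp
    linear_combination (2 * ε) * hσsq
  have hmono : -c / Real.sqrt σ2 ≤
      r * Real.sqrt ᾱ / (2 * Real.sqrt σ2) - ε * Real.sqrt σ2 / (r * Real.sqrt ᾱ) := by
    rw [harg]
    have h1 : t / (2 * Real.sqrt σ2) ≤ r * Real.sqrt ᾱ / (2 * Real.sqrt σ2) := by gcongr
    have h2 : ε * Real.sqrt σ2 / (r * Real.sqrt ᾱ) ≤ ε * Real.sqrt σ2 / t := by
      gcongr
    linarith
  -- finiteness
  have hμ_univ : gaussian d m₁ σ2 Set.univ = 1 := gaussian_univ d hd0 m₁ σ2 hσ2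
  have hν_univ : gaussian d m₂ σ2 Set.univ = 1 := gaussian_univ d hd0 m₂ σ2 hσ2
  have hμE_ne : gaussian d m₁ σ2 E ≠ ⊤ :=
    ne_top_of_le_ne_top ENNReal.one_ne_top
      ((measure_mono (Set.subset_univ E)).trans_eq hμ_univ)
  have hνS_ne : gaussian d m₂ σ2 S ≠ ⊤ :=
    ne_top_of_le_ne_top ENNReal.one_ne_top
      ((measure_mono (Set.subset_univ S)).trans_eq hν_univ)
  have hmul_ne : ENNReal.ofReal (Real.exp ε) * gaussian d m₁ σ2 E ≠ ⊤ :=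
    ENNReal.mul_ne_top ENNReal.ofReal_ne_top hμE_ne
  have hfinal := ENNReal.toReal_mono (ENNReal.add_ne_top.mpr ⟨hmul_ne, hνS_ne⟩) hcomp
  rw [ENNReal.toReal_add hmul_ne hνS_ne, ENNReal.toReal_mul,
    ENNReal.toReal_ofReal (Real.exp_nonneg ε), hνS_toReal] at hfinal
  calc ((gaussian d m₂ σ2) E).toReal
      ≤ Real.exp ε * ((gaussian d m₁ σ2) E).toReal + stdNormalCDF (-c / Real.sqrt σ2) := hfinal
    _ ≤ Real.exp ε * ((gaussian d m₁ σ2) E).toReal +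
        stdNormalCDF (r * Real.sqrt ᾱ / (2 * Real.sqrt σ2) -
          ε * Real.sqrt σ2 / (r * Real.sqrt ᾱ)) :=
        add_le_add le_rfl (stdNormalCDF_mono hmono)
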